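/- In a concrete evaluation (G_α)_{α∈addr(t)} of a tree t into G where t/α = (t/α1) ⊕_{τ,τ'} (t/α2), the node sets of G_{α1} and G_{α2} are disjoint, and no node of G_{α2} is reachable in G from the ports of G_{α1} (and symmetrically). -/

import Mathlib

structure LGraph (ν Ld Lb : Type) where
  V : Set ν
  E : Set (ν × Lb × ν)
  lab : ν → Ld
  port : List ν

def LGraph.IsEmptyGraph {ν Ld Lb : Type} (G : LGraph ν Ld Lb) : Prop :=
  G.V = ∅ ∧ G.E = ∅ ∧ G.port = []

def CloneWitness {ν Ld Lb : Type} (G : LGraph ν Ld Lb) (C : Set ν) (Cv : ν → Set ν)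
    (G' : LGraph ν Ld Lb) : Prop :=
  (∀ v, v ∈ G.V → v ∉ C → Cv v = {v}) ∧
  (∀ u v, u ∈ G.V → v ∈ G.V → u ≠ v → Disjoint (Cv u) (Cv v)) ∧
  G'.V = (⋃ v ∈ G.V, Cv v) ∧
  G'.E = {e | ∃ u ℓ w, (u, ℓ, w) ∈ G.E ∧ e.1 ∈ Cv u ∧ e.2.1 = ℓ ∧ e.2.2 ∈ Cv w} ∧
  (∀ v, v ∈ G.V → ∀ v' ∈ Cv v, G'.lab v' = G.lab v) ∧
  G'.port = G.port

def Clone {ν Ld Lb : Type} (G : LGraph ν Ld Lb) (C : Set ν) : Set (LGraph ν Ld Lb) :=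
  {G' | ∃ Cv, CloneWitness G C Cv G'}

structure ExpOp (ν Ld Lb : Type) where
  V : Set ν
  E : Set (ν × Lb × ν)
  lab : ν → Ld
  port : List ν
  dock : List ν
  C : Set ν
  E_sub : ∀ e ∈ E, e.1 ∈ V ∧ e.2.2 ∈ V
  port_nodup : port.Nodup
  dock_nodup : dock.Nodup
  port_sub : ∀ v ∈ port, v ∈ V
  dock_sub : ∀ v ∈ dock, v ∈ V
  C_sub : C ⊆ V \ ({v | v ∈ port} ∪ {v | v ∈ dock})

namespace ExpOp
variable {ν Ld Lb : Type}

def und (Φ : ExpOp ν Ld Lb) : LGraph ν Ld Lb := ⟨Φ.V, Φ.E, Φ.lab, Φ.port⟩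

def NEW (Φ : ExpOp ν Ld Lb) : Set ν := {v | v ∈ Φ.port} \ {v | v ∈ Φ.dock}

def CONT (Φ : ExpOp ν Ld Lb) : Set ν := Φ.V \ ({v | v ∈ Φ.port} ∪ {v | v ∈ Φ.dock})

/-- (R1): every edge source lies in NEW. -/
def R1 (Φ : ExpOp ν Ld Lb) : Prop := ∀ e ∈ Φ.E, e.1 ∈ Φ.NEW

/-- (R2): every dock node that is not a port is the target of some edge. -/
def R2 (Φ : ExpOp ν Ld Lb) : Prop := ∀ v ∈ Φ.dock, v ∉ Φ.port → ∃ e ∈ Φ.E, e.2.2 = v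

/-- (R3): no isolated context nodes. -/
def R3 (Φ : ExpOp ν Ld Lb) : Prop := ∀ v ∈ Φ.V, v ∉ Φ.port → ∃ e ∈ Φ.E, e.2.2 = v

end ExpOp

def Apply {ν Ld Lb : Type} (Φ : ExpOp ν Ld Lb) (G H : LGraph ν Ld Lb) : Prop :=
  G.port.length = Φ.dock.length ∧
  ∃ (Cv : ν → Set ν) (G'' : LGraph ν Ld Lb) (μ : ν → ν),
    CloneWitness Φ.und Φ.C Cv G'' ∧
    Set.InjOn μ G''.V ∧
    (∀ v ∈ Φ.NEW, μ v ∉ G.V) ∧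
    Φ.dock.map μ = G.port ∧
    (∀ v ∈ Φ.CONT, ∀ v' ∈ Cv v, μ v' ∈ G.V ∧ μ v' ∉ {x | x ∈ G.port} ∧
      G.lab (μ v') = Φ.lab v) ∧
    H.V = G.V ∪ μ '' G''.V ∧
    H.E = G.E ∪ {e | ∃ e' ∈ G''.E, e = (μ e'.1, e'.2.1, μ e'.2.2)} ∧
    (∀ v ∈ G.V, H.lab v = G.lab v) ∧
    (∀ v' ∈ G''.V, μ v' ∉ G.V → H.lab (μ v') = G''.lab v') ∧
    H.port = G''.port.map μ

def UnionOf {ν Ld Lb : Type} (G₁ G₂ H : LGraph ν Ld Lb) : Prop :=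
  Disjoint G₁.V G₂.V ∧
  H.V = G₁.V ∪ G₂.V ∧
  H.E = G₁.E ∪ G₂.E ∧
  (∀ v ∈ G₁.V, H.lab v = G₁.lab v) ∧
  (∀ v ∈ G₂.V, H.lab v = G₂.lab v) ∧
  H.port = G₁.port ++ G₂.port

def Subgraph {ν Ld Lb : Type} (G' G : LGraph ν Ld Lb) : Prop :=
  G'.V ⊆ G.V ∧ G'.E ⊆ G.E ∧ (∀ v ∈ G'.V, G'.lab v = G.lab v)

def LGraph.step {ν Ld Lb : Type} (G : LGraph ν Ld Lb) (u v : ν) : Prop :=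
  ∃ ℓ, (u, ℓ, v) ∈ G.E

/-- Nodes reachable in `G` by directed paths from the nodes occurring in `p`. -/
def LGraph.reachSet {ν Ld Lb : Type} (G : LGraph ν Ld Lb) (p : List ν) : Set ν :=
  {v | ∃ u ∈ p, Relation.ReflTransGen G.step u v}

/-- `G↓p`: the subgraph of `G` induced by the nodes reachable from `p`, with port sequence `p`. -/
def LGraph.restrictReach {ν Ld Lb : Type} (G : LGraph ν Ld Lb) (p : List ν) : LGraph ν Ld Lb :=
  ⟨G.reachSet p, {e | e ∈ G.E ∧ e.1 ∈ G.reachSet p ∧ e.2.2 ∈ G.reachSet p}, G.lab, p⟩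

inductive OpTree (ν Ld Lb : Type) : Type where
  | phi : OpTree ν Ld Lb
  | ext : ExpOp ν Ld Lb → OpTree ν Ld Lb → OpTree ν Ld Lb
  | union : OpTree ν Ld Lb → OpTree ν Ld Lb → OpTree ν Ld Lb

namespace OpTree
variable {ν Ld Lb : Type}

def subtree : OpTree ν Ld Lb → List ℕ → Option (OpTree ν Ld Lb)
  | t, [] => some t
  | .ext _ t, 1 :: α => t.subtree α
  | .union t₁ _, 1 :: α => t₁.subtree α
  | .union _ t₂, 2 :: α => t₂.subtree α
  | _, _ => none

def Addr (t : OpTree ν Ld Lb) (α : List ℕ) : Prop := (t.subtree α).isSome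

def ops : OpTree ν Ld Lb → Set (ExpOp ν Ld Lb)
  | .phi => ∅
  | .ext Φ t => insert Φ t.ops
  | .union t₁ t₂ => t₁.ops ∪ t₂.ops

end OpTree

/-- A concrete evaluation of the tree `t` into the graph `G`: a family of subgraphs of `G`
(indexed by Gorn addresses, with no renaming of nodes) with `ev [] = G`, respecting the
operations labelling `t`. -/
def ConcreteEval {ν Ld Lb : Type} (t : OpTree ν Ld Lb) (G : LGraph ν Ld Lb)
    (ev : List ℕ → LGraph ν Ld Lb) : Prop :=
  ev [] = G ∧
  ∀ α, t.Addr α →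
    Subgraph (ev α) G ∧
    (t.subtree α = some .phi → (ev α).IsEmptyGraph) ∧
    (∀ Φ t', t.subtree α = some (.ext Φ t') → Apply Φ (ev (α ++ [1])) (ev α)) ∧
    (∀ t₁ t₂, t.subtree α = some (.union t₁ t₂) →
      UnionOf (ev (α ++ [1])) (ev (α ++ [2])) (ev α))

section SeparationAux

variable {ν Ld Lb : Type}

lemma subtree_append (t : OpTree ν Ld Lb) (α γ : List ℕ) :
    t.subtree (α ++ γ) = (t.subtree α).bind (·.subtree γ) := by
  induction α generalizing t with
  | nil => simp [OpTree.subtree]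
  | cons a α ih =>
    cases t with
    | phi => simp [OpTree.subtree]
    | ext Φ s =>
      match a with
      | 0 => simp [OpTree.subtree]
      | 1 => simpa [OpTree.subtree] using ih s
      | (n+2) => simp [OpTree.subtree]
    | union s₁ s₂ =>
      match a with
      | 0 => simp [OpTree.subtree]
      | 1 => simpa [OpTree.subtree] using ih s₁
      | 2 => simpa [OpTree.subtree] using ih s₂
      | (n+3) => simp [OpTree.subtree]

lemma mem_ops_of_subtree {t s : OpTree ν Ld Lb} {α : List ℕ}
    (h : t.subtree α = some s) : ∀ Φ ∈ s.ops, Φ ∈ t.ops := by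
  induction α generalizing t with
  | nil =>
    simp only [OpTree.subtree, Option.some.injEq] at h
    subst h; exact fun _ hΦ => hΦ
  | cons a α ih =>
    cases t with
    | phi => simp [OpTree.subtree] at h
    | ext Φ s' =>
      match a with
      | 0 => simp [OpTree.subtree] at h
      | 1 =>
        simp only [OpTree.subtree] at h
        exact fun Ψ hΨ => Set.mem_insert_of_mem _ (ih h Ψ hΨ)
      | (n+2) => simp [OpTree.subtree] at h
    | union s₁ s₂ =>
      match a with
      | 0 => simp [OpTree.subtree] at h
      | 1 =>
        simp only [OpTree.subtree] at h
        exact fun Ψ hΨ => Or.inl (ih h Ψ hΨ)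
      | 2 =>
        simp only [OpTree.subtree] at h
        exact fun Ψ hΨ => Or.inr (ih h Ψ hΨ)
      | (n+3) => simp [OpTree.subtree] at h

/-- Ports are nodes, and edges have both endpoints among the nodes. -/
def GoodG (G' : LGraph ν Ld Lb) : Prop :=
  (∀ v ∈ G'.port, v ∈ G'.V) ∧ (∀ e ∈ G'.E, e.1 ∈ G'.V ∧ e.2.2 ∈ G'.V)

lemma good_clone {Φ : ExpOp ν Ld Lb} {Cv : ν → Set ν} {G'' : LGraph ν Ld Lb}
    (hCW : CloneWitness Φ.und Φ.C Cv G'') : GoodG G'' := by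
  obtain ⟨hCv1, _, hGV, hGE, _, hGport⟩ := hCW
  constructor
  · intro v hv
    rw [hGport] at hv
    have hvV : v ∈ Φ.V := Φ.port_sub v hv
    have hvC : v ∉ Φ.C := fun hc => (Φ.C_sub hc).2 (Or.inl hv)
    have : Cv v = {v} := hCv1 v hvV hvC
    rw [hGV]
    exact Set.mem_biUnion hvV (by rw [this]; exact rfl)
  · intro e he
    rw [hGE] at he
    obtain ⟨u, ℓ, w, huw, h1, _, h3⟩ := he
    have hu : u ∈ Φ.V := (Φ.E_sub _ huw).1
    have hw : w ∈ Φ.V := (Φ.E_sub _ huw).2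
    rw [hGV]
    exact ⟨Set.mem_biUnion hu h1, Set.mem_biUnion hw h3⟩

lemma good_apply {Φ : ExpOp ν Ld Lb} {Gc H : LGraph ν Ld Lb}
    (hA : Apply Φ Gc H) (hGc : GoodG Gc) : GoodG H := by
  obtain ⟨_, Cv, G'', μ, hCW, _, _, _, _, hV, hE, _, _, hport⟩ := hA
  have hG'' := good_clone hCW
  constructor
  · intro v hv
    rw [hport] at hv
    obtain ⟨w, hw, rfl⟩ := List.mem_map.mp hv
    rw [hV]
    exact Or.inr ⟨w, hG''.1 w hw, rfl⟩
  · intro e he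
    rw [hE] at he
    rw [hV]
    rcases he with he | ⟨e', he', rfl⟩
    · exact ⟨Or.inl (hGc.2 e he).1, Or.inl (hGc.2 e he).2⟩
    · exact ⟨Or.inr ⟨e'.1, (hG''.2 e' he').1, rfl⟩,
        Or.inr ⟨e'.2.2, (hG''.2 e' he').2, rfl⟩⟩

variable {t : OpTree ν Ld Lb} {G : LGraph ν Ld Lb} {ev : List ℕ → LGraph ν Ld Lb}

lemma addr_of_subtree {s : OpTree ν Ld Lb} {α : List ℕ}
    (hα : t.subtree α = some s) : t.Addr α := by
  rw [OpTree.Addr, hα]; rfl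

lemma subtree_child {s : OpTree ν Ld Lb} {α : List ℕ} (hα : t.subtree α = some s)
    (a : ℕ) : t.subtree (α ++ [a]) = s.subtree [a] := by
  rw [subtree_append, hα]; rfl

lemma good_at (h : ConcreteEval t G ev) :
    ∀ (s : OpTree ν Ld Lb) (α : List ℕ), t.subtree α = some s → GoodG (ev α) := by
  intro s
  induction s with
  | phi =>
    intro α hα
    obtain ⟨hV, hE, hp⟩ := (h.2 α (addr_of_subtree hα)).2.1 hα
    exact ⟨by simp [hp], by simp [hE]⟩
  | ext Φ s ih =>
    intro α hα
    have hA := (h.2 α (addr_of_subtree hα)).2.2.1 Φ s hα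
    have hchild : t.subtree (α ++ [1]) = some s := by
      rw [subtree_child hα]; simp [OpTree.subtree]
    exact good_apply hA (ih _ hchild)
  | union s₁ s₂ ih₁ ih₂ =>
    intro α hα
    obtain ⟨_, hV, hE, _, _, hp⟩ := (h.2 α (addr_of_subtree hα)).2.2.2 s₁ s₂ hα
    have h1 := ih₁ (α ++ [1]) (by rw [subtree_child hα]; simp [OpTree.subtree])
    have h2 := ih₂ (α ++ [2]) (by rw [subtree_child hα]; simp [OpTree.subtree])
    constructor
    · intro v hv
      rw [hp, List.mem_append] at hv
      rw [hV]
      rcases hv with hv | hv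
      · exact Or.inl (h1.1 v hv)
      · exact Or.inr (h2.1 v hv)
    · intro e he
      rw [hE] at he
      rw [hV]
      rcases he with he | he
      · exact ⟨Or.inl (h1.2 e he).1, Or.inl (h1.2 e he).2⟩
      · exact ⟨Or.inr (h2.2 e he).1, Or.inr (h2.2 e he).2⟩

/-- Edge closure: every edge of `G` whose source belongs to `(ev α).V` lies in `(ev α).E`. -/
lemma closed_at (h : ConcreteEval t G ev) (hops : ∀ Φ ∈ t.ops, Φ.R1 ∧ Φ.R2) :
    ∀ α : List ℕ, t.Addr α → ∀ e ∈ G.E, e.1 ∈ (ev α).V → e ∈ (ev α).E := by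
  intro α
  induction α using List.reverseRec with
  | nil => intro _ e he _; rw [h.1]; exact he
  | append_singleton β a ih =>
    intro haddr e he hv
    have hsome : ((t.subtree β).bind (·.subtree [a])).isSome := by
      rw [← subtree_append]; exact haddr
    obtain ⟨s, hβ⟩ : ∃ s, t.subtree β = some s := by
      cases hs : t.subtree β with
      | none => rw [hs] at hsome; simp at hsome
      | some s => exact ⟨s, rfl⟩
    rw [hβ] at hsome
    simp only [Option.bind_some] at hsome
    have haddrβ : t.Addr β := addr_of_subtree hβ
    cases s with
    | phi =>
      cases a <;> simp [OpTree.subtree] at hsome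
    | ext Φ s =>
      have ha : a = 1 := by
        match a, hsome with
        | 1, _ => rfl
        | 0, hs => simp [OpTree.subtree] at hs
        | (n+2), hs => simp [OpTree.subtree] at hs
      subst ha
      have hA := (h.2 β haddrβ).2.2.1 Φ s hβ
      obtain ⟨_, Cv, G'', μ, hCW, _, hnew, _, _, hV, hE, _, _, _⟩ := hA
      have hvβ : e.1 ∈ (ev β).V := by rw [hV]; exact Or.inl hv
      have heβ : e ∈ (ev β).E := ih haddrβ e he hvβ
      rw [hE] at heβ
      rcases heβ with heβ | ⟨e', he', heq⟩
      · exact heβ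
      · exfalso
        obtain ⟨hCv1, _, _, hGE, _, _⟩ := hCW
        rw [hGE] at he'
        obtain ⟨u, ℓ, w, huw, h1, _, _⟩ := he'
        have hR1 : Φ.R1 :=
          (hops Φ (mem_ops_of_subtree hβ Φ (Set.mem_insert _ _))).1
        have hunew : u ∈ Φ.NEW := hR1 _ huw
        have huport : u ∈ Φ.port := hunew.1
        have huV : u ∈ Φ.V := Φ.port_sub u huport
        have huC : u ∉ Φ.C := fun hc => (Φ.C_sub hc).2 (Or.inl huport)
        have hCvu : Cv u = {u} := hCv1 u huV huC
        rw [hCvu] at h1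
        have he1 : e.1 = μ u := by rw [heq, h1]
        exact hnew u hunew (he1 ▸ hv)
    | union s₁ s₂ =>
      obtain ⟨hD, hV, hE, _, _, _⟩ := (h.2 β haddrβ).2.2.2 s₁ s₂ hβ
      have hg1 : GoodG (ev (β ++ [1])) :=
        good_at h s₁ _ (by rw [subtree_child hβ]; simp [OpTree.subtree])
      have hg2 : GoodG (ev (β ++ [2])) :=
        good_at h s₂ _ (by rw [subtree_child hβ]; simp [OpTree.subtree])
      have ha : a = 1 ∨ a = 2 := by
        match a, hsome with
        | 1, _ => exact Or.inl rfl
        | 2, _ => exact Or.inr rfl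
        | 0, hs => simp [OpTree.subtree] at hs
        | (n+3), hs => simp [OpTree.subtree] at hs
      have hvβ : e.1 ∈ (ev β).V := by
        rw [hV]; rcases ha with rfl | rfl
        · exact Or.inl hv
        · exact Or.inr hv
      have heβ : e ∈ (ev β).E := ih haddrβ e he hvβ
      rw [hE] at heβ
      rcases ha with rfl | rfl
      · rcases heβ with heβ | heβ
        · exact heβ
        · exact absurd (hg2.2 e heβ).1 (Set.disjoint_left.mp hD hv)
      · rcases heβ with heβ | heβ
        · exact absurd hv (Set.disjoint_left.mp hD (hg1.2 e heβ).1)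
        · exact heβ

lemma reach_subset (h : ConcreteEval t G ev) (hops : ∀ Φ ∈ t.ops, Φ.R1 ∧ Φ.R2)
    {s : OpTree ν Ld Lb} {α : List ℕ} (hα : t.subtree α = some s) :
    G.reachSet (ev α).port ⊆ (ev α).V := by
  have hgood := good_at h s α hα
  have haddr := addr_of_subtree hα
  rintro v ⟨u, hu, hpath⟩
  induction hpath with
  | refl => exact hgood.1 u hu
  | tail _ hstep ihp =>
    obtain ⟨ℓ, hEe⟩ := hstep
    exact (hgood.2 _ (closed_at h hops α haddr _ hEe ihp)).2

end SeparationAux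

/-- at a union address of a concrete evaluation of `t` into `G`, the node
sets of the two argument graphs are disjoint and no node of either is reachable in `G`
from the ports of the other. -/
theorem union_arguments_separated {ν Ld Lb : Type} (t : OpTree ν Ld Lb)
    (G : LGraph ν Ld Lb) (ev : List ℕ → LGraph ν Ld Lb)
    (hops : ∀ Φ ∈ t.ops, Φ.R1 ∧ Φ.R2)
    (h : ConcreteEval t G ev) :
    ∀ α t₁ t₂, t.subtree α = some (.union t₁ t₂) →
      Disjoint (ev (α ++ [1])).V (ev (α ++ [2])).V ∧
      (∀ v ∈ (ev (α ++ [2])).V, v ∉ G.reachSet (ev (α ++ [1])).port) ∧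
      (∀ v ∈ (ev (α ++ [1])).V, v ∉ G.reachSet (ev (α ++ [2])).port) := by
  intro α t₁ t₂ hα
  obtain ⟨hD, _, _, _, _, _⟩ := (h.2 α (addr_of_subtree hα)).2.2.2 t₁ t₂ hα
  have h1 : t.subtree (α ++ [1]) = some t₁ := by rw [subtree_child hα]; simp [OpTree.subtree]
  have h2 : t.subtree (α ++ [2]) = some t₂ := by rw [subtree_child hα]; simp [OpTree.subtree]
  refine ⟨hD, ?_, ?_⟩
  · intro v hv hr
    exact Set.disjoint_left.mp hD (reach_subset h hops h1 hr) hv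
  · intro v hv hr
    exact Set.disjoint_left.mp hD hv (reach_subset h hops h2 hr)
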